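/- Let x solve ẋ(t) = x(t) - (2/a²)·x(t)³ on [t₀, t₁] with x(t₀) = a ≠ 0 and t₁ - t₀ ≤ ln φ, where φ = (1+√5)/2 is the golden ratio. Then x(t) = a e^{t-t₀}/sqrt(2e^{2(t-t₀)} - 1), and |x(t)| ≤ |a| e^{-(t-t₀)/2} for all t ∈ [t₀, t₁]. (The key inequality is that e^{3τ} - 2e^{2τ} + 1 ≤ 0, equivalently e^{2τ}/(2e^{2τ}-1) ≤ e^{-τ}, for all τ ∈ [0, ln φ].) -/

import Mathlib

open Real Set Metric

private noncomputable def ysol (a t0 : ℝ) (t : ℝ) : ℝ :=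
  a * Real.exp (t - t0) / Real.sqrt (2 * Real.exp (2 * (t - t0)) - 1)

private lemma aux_deriv (a t0 : ℝ) (ha : a ≠ 0) (t : ℝ) (ht : t0 ≤ t) :
    HasDerivAt (ysol a t0)
      (ysol a t0 t - (2 / a ^ 2) * (ysol a t0 t) ^ 3) t := by
  unfold ysol
  have hτ : (0:ℝ) ≤ t - t0 := by linarith
  have hD1 : (1:ℝ) ≤ 2 * Real.exp (2 * (t - t0)) - 1 := by
    have := Real.one_le_exp (by linarith : (0:ℝ) ≤ 2 * (t - t0)); linarith
  have hD0 : (0:ℝ) < 2 * Real.exp (2 * (t - t0)) - 1 := by linarith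
  have hs1 : (1:ℝ) ≤ Real.sqrt (2 * Real.exp (2 * (t - t0)) - 1) := by
    have := Real.sqrt_le_sqrt hD1
    simpa using this
  have hs0 : Real.sqrt (2 * Real.exp (2 * (t - t0)) - 1) ≠ 0 := by positivity
  have hnum : HasDerivAt (fun t => a * Real.exp (t - t0)) (a * Real.exp (t - t0)) t := by
    simpa using (((hasDerivAt_id t).sub_const t0).exp).const_mul a
  have hlin : HasDerivAt (fun t : ℝ => 2 * (t - t0)) 2 t := by
    simpa using ((hasDerivAt_id t).sub_const t0).const_mul 2
  have hinner : HasDerivAt (fun t => 2 * Real.exp (2 * (t - t0)) - 1)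
      (4 * Real.exp (2 * (t - t0))) t := by
    have h := ((hlin.exp).const_mul 2).sub_const 1
    exact h.congr_deriv (by ring)
  have hden := hinner.sqrt (ne_of_gt hD0)
  have hdiv := hnum.div hden hs0
  refine hdiv.congr_deriv ?_
  set s := Real.sqrt (2 * Real.exp (2 * (t - t0)) - 1) with hsdef
  have hsq : s ^ 2 = 2 * Real.exp (2 * (t - t0)) - 1 := Real.sq_sqrt hD0.le
  have hexp2 : Real.exp (2 * (t - t0)) = Real.exp (t - t0) ^ 2 := by
    rw [← Real.exp_nat_mul]; ring_nf
  rw [hexp2] at hsq ⊢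
  field_simp
  ring

private lemma aux_bound (a t0 : ℝ) (t : ℝ) (ht0 : t0 ≤ t)
    (ht1 : t - t0 ≤ Real.log ((1 + Real.sqrt 5) / 2)) :
    |ysol a t0 t| ≤ |a| * Real.exp (-(t - t0) / 2) := by
  unfold ysol
  have hτ0 : (0:ℝ) ≤ t - t0 := by linarith
  have hq : Real.sqrt 5 ^ 2 = 5 := Real.sq_sqrt (by norm_num)
  have hφ : (1:ℝ) < (1 + Real.sqrt 5) / 2 := by
    nlinarith [Real.sqrt_nonneg 5]
  set E : ℝ := Real.exp (t - t0) with hE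
  have hE1 : (1:ℝ) ≤ E := Real.one_le_exp hτ0
  have hEφ : E ≤ (1 + Real.sqrt 5) / 2 := by
    calc E ≤ Real.exp (Real.log ((1 + Real.sqrt 5) / 2)) := Real.exp_le_exp.mpr ht1
    _ = (1 + Real.sqrt 5) / 2 := Real.exp_log (by linarith)
  have hexp2 : Real.exp (2 * (t - t0)) = E ^ 2 := by
    rw [hE, ← Real.exp_nat_mul]; ring_nf
  have hD0 : (0:ℝ) < 2 * Real.exp (2 * (t - t0)) - 1 := by
    rw [hexp2]; nlinarith
  have hs0 : (0:ℝ) < Real.sqrt (2 * Real.exp (2 * (t - t0)) - 1) := Real.sqrt_pos.mpr hD0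
  have h2 : E ^ 2 ≤ E + 1 := by
    nlinarith [mul_nonneg (sub_nonneg.mpr hEφ)
      (show (0:ℝ) ≤ E - (1 - (1 + Real.sqrt 5) / 2) by nlinarith [Real.sqrt_nonneg 5]), hq]
  have key : E ^ 3 ≤ 2 * E ^ 2 - 1 := by
    nlinarith [mul_nonneg (sub_nonneg.mpr hE1) (sub_nonneg.mpr h2)]
  rw [abs_div, abs_mul, abs_of_pos hs0, abs_of_pos (Real.exp_pos (t - t0))]
  rw [div_le_iff₀ hs0, ← hE, mul_assoc]
  apply mul_le_mul_of_nonneg_left _ (abs_nonneg a)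
  have hhalf : Real.exp (-(t - t0) / 2) ^ 2 = Real.exp (-(t - t0)) := by
    rw [← Real.exp_nat_mul]; ring_nf
  have h2' : Real.exp (-(t - t0) / 2) * Real.sqrt (2 * Real.exp (2 * (t - t0)) - 1)
      = Real.sqrt (Real.exp (-(t - t0)) * (2 * Real.exp (2 * (t - t0)) - 1)) := by
    rw [Real.sqrt_mul (Real.exp_pos _).le, ← hhalf, Real.sqrt_sq (Real.exp_pos _).le]
  rw [h2', Real.le_sqrt' (Real.exp_pos (t - t0))]
  rw [Real.exp_neg, hexp2, ← hE]
  rw [inv_mul_eq_div, le_div_iff₀ (by positivity : (0:ℝ) < E)]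
  nlinarith [key]

theorem stmt_14 (a t0 t1 : ℝ) (ha : a ≠ 0) (h01 : t0 ≤ t1)
    (hlen : t1 - t0 ≤ Real.log ((1 + Real.sqrt 5) / 2))
    (x : ℝ → ℝ) (hx0 : x t0 = a)
    (hode : ∀ t ∈ Set.Icc t0 t1, HasDerivAt x (x t - (2 / a ^ 2) * (x t) ^ 3) t) :
    ∀ t ∈ Set.Icc t0 t1,
      x t = a * Real.exp (t - t0) / Real.sqrt (2 * Real.exp (2 * (t - t0)) - 1) ∧
      |x t| ≤ |a| * Real.exp (-(t - t0) / 2) := by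
  have hyD : ∀ t ∈ Set.Icc t0 t1,
      HasDerivAt (ysol a t0) (ysol a t0 t - (2 / a ^ 2) * (ysol a t0 t) ^ 3) t :=
    fun t ht => aux_deriv a t0 ha t ht.1
  have hxc : ContinuousOn x (Set.Icc t0 t1) := fun t ht =>
    (hode t ht).continuousAt.continuousWithinAt
  have hyc : ContinuousOn (ysol a t0) (Set.Icc t0 t1) := fun t ht =>
    (hyD t ht).continuousAt.continuousWithinAt
  obtain ⟨C1, hC1⟩ := isCompact_Icc.exists_bound_of_continuousOn hxc
  obtain ⟨C2, hC2⟩ := isCompact_Icc.exists_bound_of_continuousOn hyc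
  set R : ℝ := max C1 C2 with hR
  have hxR : ∀ t ∈ Set.Icc t0 t1, x t ∈ closedBall (0:ℝ) R := fun t ht => by
    rw [mem_closedBall_zero_iff]
    exact le_trans (hC1 t ht) (le_max_left _ _)
  have hyR : ∀ t ∈ Set.Icc t0 t1, ysol a t0 t ∈ closedBall (0:ℝ) R := fun t ht => by
    rw [mem_closedBall_zero_iff]
    exact le_trans (hC2 t ht) (le_max_right _ _)
  have hR0 : (0:ℝ) ≤ R := le_trans (norm_nonneg _) ((mem_closedBall_zero_iff).mp
    (hxR t0 ⟨le_refl _, h01⟩))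
  have hc0 : (0:ℝ) ≤ 2 / a ^ 2 := by positivity
  set K : NNReal := Real.toNNReal (1 + (2 / a ^ 2) * (3 * R ^ 2)) with hK
  have hlip : ∀ t : ℝ, LipschitzOnWith K (fun z : ℝ => z - (2 / a ^ 2) * z ^ 3)
      (closedBall (0:ℝ) R) := by
    intro t
    apply LipschitzOnWith.of_dist_le_mul
    intro z hz w hw
    rw [mem_closedBall_zero_iff] at hz hw
    rw [Real.norm_eq_abs] at hz hw
    rw [Real.dist_eq, Real.dist_eq]
    have hKc : (K : ℝ) = 1 + (2 / a ^ 2) * (3 * R ^ 2) := by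
      rw [hK, Real.coe_toNNReal _ (by positivity)]
    rw [hKc]
    have h1 : (z - (2 / a ^ 2) * z ^ 3) - (w - (2 / a ^ 2) * w ^ 3)
        = (z - w) * (1 - (2 / a ^ 2) * (z ^ 2 + z * w + w ^ 2)) := by ring
    rw [h1, abs_mul, mul_comm]
    apply mul_le_mul_of_nonneg_right _ (abs_nonneg _)
    have hz2 : z ^ 2 ≤ R ^ 2 := by nlinarith [abs_nonneg z, sq_abs z]
    have hw2 : w ^ 2 ≤ R ^ 2 := by nlinarith [abs_nonneg w, sq_abs w]
    rw [abs_le]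
    constructor <;> nlinarith [sq_nonneg (z + w), sq_nonneg (z - w),
      mul_nonneg hc0 (by nlinarith [sq_nonneg (z + w), sq_nonneg (z - w)] :
        (0:ℝ) ≤ z ^ 2 + z * w + w ^ 2)]
  have heq : Set.EqOn x (ysol a t0) (Set.Icc t0 t1) := by
    apply ODE_solution_unique_of_mem_Icc_right (fun t _ => hlip t) hxc
      (fun t ht => (hode t (Set.Ico_subset_Icc_self ht)).hasDerivWithinAt)
      (fun t ht => hxR t (Set.Ico_subset_Icc_self ht)) hyc
      (fun t ht => (hyD t (Set.Ico_subset_Icc_self ht)).hasDerivWithinAt)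
      (fun t ht => hyR t (Set.Ico_subset_Icc_self ht))
    rw [hx0]
    unfold ysol
    norm_num
  intro t ht
  have h1 : x t = ysol a t0 t := heq ht
  refine ⟨by rw [h1]; rfl, ?_⟩
  rw [h1]
  exact aux_bound a t0 t ht.1 (by linarith [ht.2])
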